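/- Let N > k ≥ 1 be integers, let r ≥ 1, and let γ = (γ₁, …, γ_r) : ℝ → ℝ^r be a map each of whose coordinates γ_i is real analytic on ℝ. Then the function ℝ → ℝ defined by t ↦ (∑_{i=1}^r γ_i(t)^(2^N))^(1/2^k) (the real 2^k-th root of the nonnegative number ∑ γ_i(t)^(2^N)) is real analytic on ℝ. -/

import Mathlib

open Filter Real

/-- Auxiliary: analyticity of `t ↦ u t ^ c` when `u` is analytic and positive at a point. -/
lemma analyticAt_rpow_of_pos {u : ℝ → ℝ} {t₀ : ℝ} (hu : AnalyticAt ℝ u t₀)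
    (hu0 : 0 < u t₀) (c : ℝ) : AnalyticAt ℝ (fun t => u t ^ c) t₀ := by
  have hlog : AnalyticAt ℝ Real.log (u t₀) :=
    (Real.contDiffAt_log.2 hu0.ne').analyticAt
  have h1 : AnalyticAt ℝ (fun t => Real.exp (c * Real.log (u t))) t₀ :=
    analyticAt_rexp.comp ((analyticAt_const.mul (hlog.comp hu)))
  apply h1.congr
  have hpos : ∀ᶠ t in nhds t₀, 0 < u t :=
    hu.continuousAt.eventually (eventually_gt_nhds hu0)
  filter_upwards [hpos] with t ht
  rw [Real.rpow_def_of_pos ht, mul_comm]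

/-- Arc-analyticity of `x ↦ (∑ x_i^(2^N))^(1/2^k)` for `k < N`: composed with a
real analytic arc `γ : ℝ → ℝ^r`, the function
`t ↦ (∑_i γ_i(t)^(2^N))^(1/2^k)` is real analytic on `ℝ`. -/
theorem analyticOn_root_sum_pow_comp_arc (N k r : ℕ) (hk : 1 ≤ k) (hkN : k < N)
    (hr : 1 ≤ r) (γ : ℝ → Fin r → ℝ)
    (hγ : ∀ i, AnalyticOn ℝ (fun t => γ t i) Set.univ) :
    AnalyticOn ℝ (fun t => (∑ i, γ t i ^ (2 ^ N)) ^ ((1 : ℝ) / 2 ^ k)) Set.univ := by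
  rw [analyticOn_univ]
  intro t₀ _
  have hγa : ∀ i, AnalyticAt ℝ (fun t => γ t i) t₀ := fun i =>
    (analyticOn_univ.mp (hγ i)) t₀ (Set.mem_univ _)
  have hc0 : ((1 : ℝ) / 2 ^ k) ≠ 0 := by positivity
  by_cases h0 : ∀ᶠ t in nhds t₀, (∑ i, γ t i ^ (2 ^ N)) = 0
  · apply (analyticAt_const (v := (0 : ℝ))).congr
    filter_upwards [h0] with t ht
    rw [ht, Real.zero_rpow hc0]
  · -- some coordinate has finite order
    have hex : ∃ i, analyticOrderAt (fun t => γ t i) t₀ ≠ ⊤ := by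
      by_contra hall
      push_neg at hall
      apply h0
      have : ∀ᶠ t in nhds t₀, ∀ i, γ t i = 0 :=
        eventually_all.mpr fun i => analyticOrderAt_eq_top.mp (hall i)
      filter_upwards [this] with t ht
      simp only [ht]
      simp [(pow_pos (two_pos : (0:ℕ) < 2) N).ne']
    obtain ⟨i₀, hi₀⟩ := hex
    set T : Set ℕ := {n | ∃ i, analyticOrderAt (fun t => γ t i) t₀ = (n : ℕ∞)} with hT
    have hTne : T.Nonempty := ⟨(analyticOrderAt (fun t => γ t i₀) t₀).toNat, i₀, (ENat.coe_toNat hi₀).symm⟩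
    set m : ℕ := sInf T with hm
    obtain ⟨i₁, hi₁⟩ := Nat.sInf_mem hTne
    -- for each i, factor out (t - t₀)^m
    have key : ∀ i, ∃ h : ℝ → ℝ, AnalyticAt ℝ h t₀ ∧
        (∀ᶠ t in nhds t₀, γ t i = (t - t₀) ^ m * h t) ∧
        (analyticOrderAt (fun t => γ t i) t₀ = (m : ℕ∞) → h t₀ ≠ 0) := by
      intro i
      rcases eq_or_ne (analyticOrderAt (fun t => γ t i) t₀) ⊤ with ho | ho
      · refine ⟨0, analyticAt_const, ?_, by simp [ho]⟩
        filter_upwards [analyticOrderAt_eq_top.mp ho] with t ht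
        simp [ht]
      · set n : ℕ := (analyticOrderAt (fun t => γ t i) t₀).toNat with hn
        have hon : analyticOrderAt (fun t => γ t i) t₀ = (n : ℕ∞) := (ENat.coe_toNat ho).symm
        have hmn : m ≤ n := Nat.sInf_le ⟨i, hon⟩
        obtain ⟨g, hg, hg0, hfg⟩ := ((hγa i).analyticOrderAt_eq_natCast (n := n)).mp hon
        refine ⟨fun t => (t - t₀) ^ (n - m) * g t,
          (((analyticAt_id.sub analyticAt_const).pow _).mul hg), ?_, ?_⟩
        · filter_upwards [hfg] with t ht
          rw [ht, smul_eq_mul, ← mul_assoc, ← pow_add, Nat.add_sub_cancel' hmn]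
        · intro horder
          have : n = m := by
            rw [hon] at horder
            exact_mod_cast horder
          simp [this, hg0]
    choose H Hana Heq Hne using key
    have hm_i₁ : H i₁ t₀ ≠ 0 := Hne i₁ hi₁
    set u : ℝ → ℝ := fun t => ∑ i, H i t ^ (2 ^ N) with hu
    have huana : AnalyticAt ℝ u t₀ :=
      Finset.analyticAt_fun_sum _ fun i _ => (Hana i).pow _
    have hNpos : 0 < 2 ^ N := pow_pos two_pos N
    have hevN : Even (2 ^ N) := Nat.even_pow.mpr ⟨even_two, by omega⟩
    have hu0 : 0 < u t₀ := by
      apply Finset.sum_pos' (fun i _ => hevN.pow_nonneg _)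
      exact ⟨i₁, Finset.mem_univ _, hevN.pow_pos hm_i₁⟩
    have hupos : ∀ᶠ t in nhds t₀, 0 < u t :=
      huana.continuousAt.eventually (eventually_gt_nhds hu0)
    have hfeq : ∀ᶠ t in nhds t₀,
        (∑ i, γ t i ^ (2 ^ N)) = (t - t₀) ^ (2 ^ N * m) * u t := by
      have hall : ∀ᶠ t in nhds t₀, ∀ i, γ t i = (t - t₀) ^ m * H i t :=
        eventually_all.mpr Heq
      filter_upwards [hall] with t ht
      rw [hu, Finset.mul_sum]
      apply Finset.sum_congr rfl
      intro i _
      rw [ht i, mul_pow, ← pow_mul, mul_comm m (2 ^ N)]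
    -- exponent arithmetic
    have hsplit : 2 ^ (N - k) * 2 ^ k = 2 ^ N := by
      rw [← pow_add, Nat.sub_add_cancel hkN.le]
    have hev : Even (2 ^ (N - k) * m) :=
      (Nat.even_pow.mpr ⟨even_two, by omega⟩).mul_right m
    have hkne : ((2 : ℝ) ^ k) ≠ 0 := by positivity
    -- the analytic candidate
    have hrhs : AnalyticAt ℝ
        (fun t => (t - t₀) ^ (2 ^ (N - k) * m) * (u t) ^ ((1 : ℝ) / 2 ^ k)) t₀ :=
      ((analyticAt_id.sub analyticAt_const).pow _).mul
        (analyticAt_rpow_of_pos huana hu0 _)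
    apply hrhs.congr
    filter_upwards [hfeq, hupos] with t ht htu
    have hy : (0 : ℝ) ≤ (t - t₀) ^ (2 ^ (N - k) * m) := hev.pow_nonneg _
    have hpoweq : (t - t₀) ^ (2 ^ N * m) = ((t - t₀) ^ (2 ^ (N - k) * m)) ^ (2 ^ k) := by
      rw [← pow_mul]
      ring_nf
      rw [mul_comm m, mul_assoc, hsplit, mul_comm]
    rw [ht, hpoweq]
    rw [Real.mul_rpow (by positivity) htu.le]
    congr 1
    rw [← Real.rpow_natCast ((t - t₀) ^ (2 ^ (N - k) * m)) (2 ^ k),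
      ← Real.rpow_mul hy]
    push_cast
    rw [mul_one_div, div_self hkne, Real.rpow_one]
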